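/- arXiv:2108.07991 — 3 statements merged into one kernel-verified Lean document; each statement's English description precedes it below -/
import Mathlib

section
/- Let R be a commutative Noetherian local ring, x ∈ R, and N a finitely generated R-module. The following are equivalent: (i) the multiplication map N → N by x factors through a finitely generated free R-module; (ii) x · Ext_R^i(N, X) = 0 for every i ≥ 1 and every finitely generated R-module X; (iii) x · Ext_R^1(N, Ω_R N) = 0, where Ω_R N is the first syzygy of N in a minimal free resolution. -/
open CategoryTheory IsLocalRing

section Defs
variable (R : Type) [CommRing R]

/-- vanishing of `Tor_n(M, N)` -/
noncomputable abbrev TorZero [IsNoetherianRing R] (n : ℕ) (M N : ModuleCat.{0} R) : Prop :=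
  Subsingleton (((Tor (ModuleCat.{0} R) n).obj M).obj N)

/-- vanishing of `Ext^n(M, N)` -/
noncomputable abbrev ExtZero (n : ℕ) (M N : ModuleCat.{0} R) : Prop :=
  Subsingleton (((Ext R (ModuleCat.{0} R) n).obj (Opposite.op M)).obj N)

/-- `x` annihilates `Ext^n(M, N)` -/
noncomputable abbrev SMulExtZero (x : R) (n : ℕ) (M N : ModuleCat.{0} R) : Prop :=
  ∀ e : ((Ext R (ModuleCat.{0} R) n).obj (Opposite.op M)).obj N, x • e = 0

/-- `M` is a minimal first syzygy `Ω N` of `N` over the local ring `R`: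
the kernel of a minimal free cover of `N`. -/
def IsSyzygyOf [IsLocalRing R] (N M : ModuleCat.{0} R) : Prop :=
  ∃ (q : ℕ) (g : (Fin q → R) →ₗ[R] N), Function.Surjective g ∧
    (LinearMap.ker g : Submodule R (Fin q → R)) ≤ (maximalIdeal R) • ⊤ ∧
    Nonempty (M ≃ₗ[R] LinearMap.ker g)

/-- `M` is a minimal `n`-th syzygy `Ω^n N` of `N` (with `Ω^0 N = N`). -/
def IsNthSyzygyOf [IsLocalRing R] : ℕ → ModuleCat.{0} R → ModuleCat.{0} R → Prop
  | 0, N, M => Nonempty (M ≃ₗ[R] N)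
  | (n+1), N, M => ∃ K : ModuleCat.{0} R, IsSyzygyOf R N K ∧ IsNthSyzygyOf n K M

/-- `M` and `N` are stably isomorphic (isomorphic up to free direct summands). -/
def StablyIso (M N : ModuleCat.{0} R) : Prop :=
  ∃ p q : ℕ, Nonempty ((↥M × (Fin p → R)) ≃ₗ[R] (↥N × (Fin q → R)))

/-- Tor-rigidity: one vanishing Tor (against any f.g. module) forces all higher ones. -/
noncomputable def TorRigid [IsNoetherianRing R] (M : ModuleCat.{0} R) : Prop :=
  ∀ (N : ModuleCat.{0} R), Module.Finite R N →
    ∀ i : ℕ, 1 ≤ i → TorZero R i M N → ∀ j, i ≤ j → TorZero R j M N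

/-- `n`-Tor-rigidity: `n` consecutive vanishing Tor's force all higher ones. -/
noncomputable def NTorRigid [IsNoetherianRing R] (n : ℕ) (M : ModuleCat.{0} R) : Prop :=
  ∀ (N : ModuleCat.{0} R), Module.Finite R N → ∀ t : ℕ,
    (∀ i, t + 1 ≤ i → i ≤ t + n → TorZero R i M N) → ∀ j, t + 1 ≤ j → TorZero R j M N

/-- the `𝔞`-depth of `M`: `∞` if `𝔞M = M`, otherwise the supremum (= common length) of
maximal `M`-regular sequences contained in `𝔞`. -/
noncomputable def edepth (𝔞 : Ideal R) (M : Type) [AddCommGroup M] [Module R M] : ℕ∞ :=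
  letI := Classical.dec (𝔞 • (⊤ : Submodule R M) = ⊤)
  if 𝔞 • (⊤ : Submodule R M) = ⊤ then ⊤
  else sSup {n : ℕ∞ | ∃ rs : List R, (rs.length : ℕ∞) = n ∧ (∀ r ∈ rs, r ∈ 𝔞) ∧
    RingTheory.Sequence.IsRegular M rs}

/-- `T` is an Auslander transpose of `N`, computed from a minimal free presentation. -/
def IsTransposeOf [IsLocalRing R] (N T : ModuleCat.{0} R) : Prop :=
  ∃ (q p : ℕ) (g : (Fin q → R) →ₗ[R] N) (f : (Fin p → R) →ₗ[R] (Fin q → R)),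
    Function.Surjective g ∧
    LinearMap.range f = LinearMap.ker g ∧
    (LinearMap.ker g : Submodule R (Fin q → R)) ≤ (maximalIdeal R) • ⊤ ∧
    (LinearMap.ker f : Submodule R (Fin p → R)) ≤ (maximalIdeal R) • ⊤ ∧
    Nonempty (T ≃ₗ[R] (Module.Dual R (Fin p → R) ⧸ LinearMap.range f.dualMap))

/-- `depth (R_𝔭)`, the depth of the local ring `R_𝔭`. -/
noncomputable def depthLoc (𝔭 : Ideal R) [𝔭.IsPrime] : ℕ∞ :=
  edepth (Localization.AtPrime 𝔭) (maximalIdeal (Localization.AtPrime 𝔭)) (Localization.AtPrime 𝔭)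

/-- `depth_{R_𝔭} (M_𝔭)`, the depth of the localized module over the localized ring. -/
noncomputable def primeDepth (𝔭 : Ideal R) [𝔭.IsPrime] (M : Type) [AddCommGroup M]
    [Module R M] : ℕ∞ :=
  edepth (Localization.AtPrime 𝔭) (maximalIdeal (Localization.AtPrime 𝔭))
    (LocalizedModule 𝔭.primeCompl M)

/-- A Noetherian local ring is Gorenstein iff `R` has finite injective dimension as an
`R`-module, i.e. `Ext^i(k, R) = 0` for all sufficiently large `i`. -/
noncomputable def IsGorensteinLocal [IsLocalRing R] : Prop :=
  ∃ d : ℕ, ∀ i : ℕ, d < i → ExtZero R i (ModuleCat.of R (R ⧸ maximalIdeal R)) (ModuleCat.of R R)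

/-- An unramified regular local ring: the maximal ideal is generated by `dim R` elements, and
no rational prime that is a nonzero element of the maximal ideal lies in its square. -/
def IsUnramifiedRegularLocal [IsLocalRing R] : Prop :=
  (∃ s : Finset R, Ideal.span (s : Set R) = maximalIdeal R ∧
    (s.card : WithBot ℕ∞) = ringKrullDim R) ∧
  ∀ p : ℕ, p.Prime → (p : R) ≠ 0 → (p : R) ∈ maximalIdeal R → (p : R) ∉ (maximalIdeal R) ^ 2

end Defs


section Aux

variable {R : Type} [CommRing R]

private lemma smul_forall_zero_iff' {A B : ModuleCat.{0} R} (φ : A ≅ B) (x : R) :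
    (∀ a : A, x • a = 0) ↔ ∀ b : B, x • b = 0 := by
  constructor
  · intro h b
    have hb : b = φ.hom (φ.inv b) := by
      have h2 : (φ.inv ≫ φ.hom) b = b := by rw [φ.inv_hom_id]; rfl
      exact h2.symm
    rw [hb, ← map_smul, h, map_zero]
  · intro h a
    have ha : a = φ.inv (φ.hom a) := by
      have h2 : (φ.hom ≫ φ.inv) a = a := by rw [φ.hom_inv_id]; rfl
      exact h2.symm
    rw [ha, ← map_smul, h, map_zero]

private lemma smul_homology_zero_iff' (S : ShortComplex (ModuleCat.{0} R)) (x : R) :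
    (∀ e : S.homology, x • e = 0) ↔
    ∀ z : S.X₂, S.g z = 0 → ∃ w : S.X₁, S.f w = x • z := by
  rw [smul_forall_zero_iff' S.moduleCatHomologyIso x]
  constructor
  · intro h z hz
    have hh := h (S.moduleCatLeftHomologyData.π.hom ⟨z, hz⟩)
    replace hh := ((S.moduleCatLeftHomologyData.π.hom).map_smul x ⟨z, hz⟩).trans hh
    have hmem : x • (⟨z, hz⟩ : LinearMap.ker S.g.hom) ∈ LinearMap.range S.moduleCatToCycles := by
      rwa [← Submodule.Quotient.mk_eq_zero]
    obtain ⟨w, hw⟩ := hmem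
    exact ⟨w, congrArg Subtype.val hw⟩
  · intro h e
    obtain ⟨z, rfl⟩ := (ModuleCat.epi_iff_surjective S.moduleCatLeftHomologyData.π).1 inferInstance e
    obtain ⟨w, hw⟩ := h z.1 z.2
    rw [← map_smul]
    rw [show (S.moduleCatLeftHomologyData.π) (x • z) = Submodule.Quotient.mk (x • z) from rfl]
    exact (Submodule.Quotient.mk_eq_zero (LinearMap.range S.moduleCatToCycles)).2 ⟨w, Subtype.ext hw⟩

private lemma smulExtZero_iff' (x : R) (N X : ModuleCat.{0} R) (P : ProjectiveResolution N)
    (m : ℕ) :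
    (∀ e : ((Ext R (ModuleCat.{0} R) (m+1)).obj (Opposite.op N)).obj X, x • e = 0) ↔
    ∀ c : P.complex.X (m+1) ⟶ X, P.complex.d (m+2) (m+1) ≫ c = 0 →
      ∃ h : P.complex.X m ⟶ X, x • c = P.complex.d (m+1) m ≫ h := by
  have e1 : ((Ext R (ModuleCat.{0} R) (m+1)).obj (Opposite.op N)).obj X ≅
      ((P.complex.linearYonedaObj R X).sc' m (m+1) (m+2)).homology :=
    P.isoExt (m+1) X ≪≫ HomologicalComplex.homologyIsoSc' _ m (m+1) (m+2) (by simp) (by simp)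
  rw [smul_forall_zero_iff' e1 x, smul_homology_zero_iff']
  constructor
  · intro H c hc
    obtain ⟨w, hw⟩ := H c hc
    exact ⟨w, hw.symm⟩
  · intro H z hz
    obtain ⟨w, hw⟩ := H z hz
    exact ⟨w, hw.symm⟩

variable {N : ModuleCat.{0} R} (P : ProjectiveResolution N)

/-- the augmentation map of a projective resolution, as a morphism to `N` itself -/
private noncomputable def resPi : P.complex.X 0 ⟶ N := P.π.f 0

private lemma resPi_surj : Function.Surjective (resPi P) := by
  rw [← ModuleCat.epi_iff_surjective]
  exact (inferInstance : Epi (P.π.f 0))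

private lemma resPi_d : P.complex.d 1 0 ≫ resPi P = 0 := by
  have h := P.complex_d_comp_π_f_zero
  exact h

private lemma resPi_exact (p : P.complex.X 0) (hp : resPi P p = 0) :
    ∃ y, P.complex.d 1 0 y = p := by
  have hS : (ShortComplex.mk (P.complex.d 1 0) (resPi P) (resPi_d P)).Exact :=
    ShortComplex.exact_of_g_is_cokernel _ P.isColimitCokernelCofork
  rw [ShortComplex.moduleCat_exact_iff] at hS
  exact hS p hp

private lemma res_exact_succ (n : ℕ) (p : P.complex.X (n+1)) (hp : P.complex.d (n+1) n p = 0) :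
    ∃ y, P.complex.d (n+2) (n+1) y = p := by
  have h := P.exact_succ n
  rw [ShortComplex.moduleCat_exact_iff] at h
  exact h p hp

private lemma res_projective (n : ℕ) : Module.Projective R (P.complex.X n) := by
  rw [IsProjective.iff_projective]
  exact (inferInstance : Projective (P.complex.X n))

/-- lifting along a map whose range contains the range of the given map -/
private lemma lift_through {M P' Q : Type} [AddCommGroup M] [Module R M] [AddCommGroup P']
    [Module R P'] [AddCommGroup Q] [Module R Q] [Module.Projective R P']
    (f : M →ₗ[R] Q) (g : P' →ₗ[R] Q) (h : ∀ p, ∃ m, f m = g p) :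
    ∃ h' : P' →ₗ[R] M, f ∘ₗ h' = g := by
  let f' : M →ₗ[R] LinearMap.range f := f.rangeRestrict
  have hle : ∀ p : P', g p ∈ LinearMap.range f := by
    intro p
    obtain ⟨m, hm⟩ := h p
    exact ⟨m, hm⟩
  let g' : P' →ₗ[R] LinearMap.range f := g.codRestrict _ hle
  obtain ⟨h', hh'⟩ := Module.projective_lifting_property f' g' f.surjective_rangeRestrict
  refine ⟨h', ?_⟩
  ext p
  have := congrArg (fun u => (u p : Q)) hh'
  exact this

private lemma good_exists (x : R) (φ₀ : P.complex.X 0 →ₗ[R] P.complex.X 0)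
    (hφ : ∀ p, resPi P (φ₀ p) = x • resPi P p)
    (hφd : ∀ p, φ₀ (P.complex.d 1 0 p) = 0) :
    ∀ i, ∃ (s' : (P.complex.X (i+1) : Type) →ₗ[R] P.complex.X (i+2))
      (s : (P.complex.X i : Type) →ₗ[R] P.complex.X (i+1)),
      (P.complex.d (i+2) (i+1)).hom ∘ₗ s' =
        (x • LinearMap.id : _ →ₗ[R] _) - s ∘ₗ (P.complex.d (i+1) i).hom := by
  intro i
  induction i with
  | zero =>
    haveI := res_projective P 0
    haveI := res_projective P 1
    -- first, lift x•id - φ₀ through d 1 0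
    obtain ⟨s₀, hs₀⟩ := lift_through (R := R) (P.complex.d 1 0).hom
      ((x • LinearMap.id : (P.complex.X 0 : Type) →ₗ[R] P.complex.X 0) - φ₀)
      (by
        intro p
        apply resPi_exact
        have h1 : ((x • LinearMap.id : (P.complex.X 0 : Type) →ₗ[R] P.complex.X 0) - φ₀) p
            = x • p - φ₀ p := rfl
        rw [h1, map_sub, map_smul, hφ p, sub_self])
    -- then lift x•id_{P₁} - s₀ ∘ d through d 2 1
    obtain ⟨s₁, hs₁⟩ := lift_through (R := R) (P.complex.d 2 1).hom
      ((x • LinearMap.id : (P.complex.X 1 : Type) →ₗ[R] P.complex.X 1) -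
        s₀ ∘ₗ (P.complex.d 1 0).hom)
      (by
        intro p
        apply res_exact_succ P 0
        have h1 : ((x • LinearMap.id : (P.complex.X 1 : Type) →ₗ[R] P.complex.X 1) -
            s₀ ∘ₗ (P.complex.d 1 0).hom) p = x • p - s₀ (P.complex.d 1 0 p) := rfl
        have h2 : P.complex.d 1 0 (s₀ (P.complex.d 1 0 p)) =
            x • P.complex.d 1 0 p - φ₀ (P.complex.d 1 0 p) := by
          have := congrArg (fun u => u (P.complex.d 1 0 p)) hs₀
          exact this
        rw [h1, map_sub, map_smul, h2, hφd p, sub_zero, sub_self])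
    exact ⟨s₁, s₀, hs₁⟩
  | succ i ih =>
    obtain ⟨s', s, heq⟩ := ih
    haveI := res_projective P (i+2)
    obtain ⟨s'', hs''⟩ := lift_through (R := R) (P.complex.d (i+3) (i+2)).hom
      ((x • LinearMap.id : (P.complex.X (i+2) : Type) →ₗ[R] P.complex.X (i+2)) -
        s' ∘ₗ (P.complex.d (i+2) (i+1)).hom)
      (by
        intro p
        apply res_exact_succ P (i+1)
        have h1 : ((x • LinearMap.id : (P.complex.X (i+2) : Type) →ₗ[R] P.complex.X (i+2)) -
            s' ∘ₗ (P.complex.d (i+2) (i+1)).hom) p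
            = x • p - s' (P.complex.d (i+2) (i+1) p) := rfl
        have h2 : P.complex.d (i+2) (i+1) (s' (P.complex.d (i+2) (i+1) p)) =
            x • P.complex.d (i+2) (i+1) p -
              s (P.complex.d (i+1) i (P.complex.d (i+2) (i+1) p)) := by
          have := congrArg (fun u => u (P.complex.d (i+2) (i+1) p)) heq
          exact this
        have hdd : P.complex.d (i+1) i (P.complex.d (i+2) (i+1) p) = 0 :=
          congrArg (fun v => v p) (P.complex.d_comp_d (i+2) (i+1) i)
        rw [h1, map_sub, map_smul, h2, hdd, map_zero, sub_zero, sub_self])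
    exact ⟨s'', s', hs''⟩

end Aux

section Cover

variable {R : Type} [CommRing R] [IsLocalRing R]

/-- extend by zero at coordinate j, as a linear map -/
noncomputable def extendZero {q : ℕ} (j : Fin (q+1)) : (Fin q → R) →ₗ[R] (Fin (q+1) → R) where
  toFun w := j.insertNth 0 w
  map_add' w₁ w₂ := by
    show Fin.insertNth (α := fun _ => R) j 0 (w₁ + w₂) = Fin.insertNth (α := fun _ => R) j 0 w₁ + Fin.insertNth (α := fun _ => R) j 0 w₂
    refine Fin.insertNth_eq_iff.2 ⟨?_, ?_⟩
    · simp [Fin.insertNth_apply_same]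
    · funext i
      simp [Fin.removeNth, Fin.insertNth_apply_succAbove]
  map_smul' r w := by
    show Fin.insertNth (α := fun _ => R) j 0 (r • w) = r • Fin.insertNth (α := fun _ => R) j 0 w
    refine Fin.insertNth_eq_iff.2 ⟨?_, ?_⟩
    · simp [Fin.insertNth_apply_same]
    · funext i
      simp [Fin.removeNth, Fin.insertNth_apply_succAbove]

lemma exists_min_cover (N : Type) [AddCommGroup N] [Module R N] [Module.Finite R N] :
    ∃ (q : ℕ) (g : (Fin q → R) →ₗ[R] N), Function.Surjective g ∧
      LinearMap.ker g ≤ (maximalIdeal R) • (⊤ : Submodule R (Fin q → R)) := by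
  classical
  obtain ⟨n, f, hf⟩ := Module.Finite.exists_fin' R N
  let Q : ℕ → Prop := fun q => ∃ g : (Fin q → R) →ₗ[R] N, Function.Surjective g
  have hQ : ∃ q, Q q := ⟨n, f, hf⟩
  obtain ⟨q₀, ⟨g, hg⟩, hmin⟩ : ∃ q₀, Q q₀ ∧ ∀ k, k < q₀ → ¬ Q k :=
    ⟨Nat.find hQ, Nat.find_spec hQ, fun k hk => Nat.find_min hQ hk⟩
  refine ⟨q₀, g, hg, ?_⟩
  intro v hv
  have hco : ∀ j, v j ∈ maximalIdeal R := by
    intro j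
    by_contra hj
    obtain ⟨u, hu⟩ : IsUnit (v j) := by
      by_contra h
      exact hj h
    match q₀, g, hg, hmin, v, hv, j, hu with
    | (q'+1), g, hg, hmin, v, hv, j, hu =>
    have hsurj : Function.Surjective (g ∘ₗ extendZero j) := by
      intro nn
      obtain ⟨w, hw⟩ := hg nn
      set c : R := w j * (↑u⁻¹ : Rˣ) with hc
      refine ⟨j.removeNth (w - c • v), ?_⟩
      have hw0 : (w - c • v) j = 0 := by
        simp [hc, ← hu, mul_assoc]
      have hins : (extendZero j) (j.removeNth (w - c • v)) = w - c • v := by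
        show j.insertNth 0 (j.removeNth (w - c • v)) = w - c • v
        rw [← hw0]
        exact Fin.insertNth_self_removeNth ..
      rw [LinearMap.comp_apply, hins, map_sub, map_smul, hw]
      have hgv : g v = 0 := hv
      rw [hgv, smul_zero, sub_zero]
    exact (hmin q' (Nat.lt_succ_self q')) ⟨_, hsurj⟩
  have hv2 : (∑ i, Pi.single i (v i) : Fin q₀ → R) ∈
      (maximalIdeal R) • (⊤ : Submodule R (Fin q₀ → R)) := by
    apply Submodule.sum_mem
    intro i _
    have hsingle : (Pi.single i (v i) : Fin q₀ → R) = (v i) • (Pi.single i (1 : R) : Fin q₀ → R) := by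
      rw [← Pi.single_smul, smul_eq_mul, mul_one]
    rw [hsingle]
    exact Submodule.smul_mem_smul (hco i) trivial
  simpa [Finset.univ_sum_single] using hv2

end Cover

/-- factoring multiplication by `x` through a free module is equivalent to
`x` annihilating all `Ext^i(N, -)`, and to `x` annihilating `Ext^1(N, Ω N)`. -/
theorem mul_factors_through_free_tfae
    (R : Type) [CommRing R] [IsNoetherianRing R] [IsLocalRing R]
    (x : R) (N : ModuleCat.{0} R) [Module.Finite R N] :
    List.TFAE [
      (∃ (q : ℕ) (f : N →ₗ[R] (Fin q → R)) (g : (Fin q → R) →ₗ[R] N),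
        g ∘ₗ f = x • (LinearMap.id : N →ₗ[R] N)),
      (∀ i : ℕ, 1 ≤ i → ∀ X : ModuleCat.{0} R, Module.Finite R X → SMulExtZero R x i N X),
      (∀ ΩN : ModuleCat.{0} R, IsSyzygyOf R N ΩN → SMulExtZero R x 1 N ΩN)] := by
  tfae_have 1 → 2
  · rintro ⟨q, f, g, hfg⟩ i hi X _hX
    obtain ⟨m, rfl⟩ : ∃ m, i = m + 1 := ⟨i - 1, (Nat.succ_pred_eq_of_pos hi).symm⟩
    obtain ⟨P⟩ := (inferInstance : HasProjectiveResolution N).out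
    refine (smulExtZero_iff' x N X P m).2 ?_
    intro c hc
    haveI : Module.Projective R (Fin q → R) := inferInstance
    obtain ⟨α, hα⟩ := lift_through (resPi P).hom g
      (fun p => resPi_surj P (g p))
    set φ₀ : (P.complex.X 0 : Type) →ₗ[R] P.complex.X 0 := α ∘ₗ f ∘ₗ (resPi P).hom
      with hφ₀def
    have hφ : ∀ p, resPi P (φ₀ p) = x • resPi P p := by
      intro p
      have h1 : resPi P (α (f (resPi P p))) = g (f (resPi P p)) :=
        congrArg (fun u => u (f (resPi P p))) hα
      have h2 : g (f (resPi P p)) = x • resPi P p := congrArg (fun u => u (resPi P p)) hfg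
      exact h1.trans h2
    have hφd : ∀ p, φ₀ (P.complex.d 1 0 p) = 0 := by
      intro p
      have h1 : resPi P (P.complex.d 1 0 p) = 0 := congrArg (fun u => u p) (resPi_d P)
      show α (f (resPi P (P.complex.d 1 0 p))) = 0
      rw [h1, map_zero, map_zero]
    obtain ⟨s', s, heq⟩ := good_exists P x φ₀ hφ hφd m
    refine ⟨ModuleCat.ofHom (c.hom ∘ₗ s), ?_⟩
    ext p
    have h1 : P.complex.d (m+2) (m+1) (s' p) = x • p - s (P.complex.d (m+1) m p) :=
      congrArg (fun u => u p) heq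
    have h2 : c (P.complex.d (m+2) (m+1) (s' p)) = 0 :=
      congrArg (fun u => u (s' p)) hc
    have h3 : c (x • p - s (P.complex.d (m+1) m p)) = 0 := by rw [← h1]; exact h2
    rw [map_sub, map_smul, sub_eq_zero] at h3
    exact h3
  tfae_have 2 → 3
  · rintro h2 ΩN ⟨q, g, hsurj, hker, ⟨e⟩⟩
    haveI : IsNoetherian R (Fin q → R) := inferInstance
    haveI : Module.Finite R (LinearMap.ker g) :=
      Module.Finite.iff_fg.mpr (IsNoetherian.noetherian _)
    haveI : Module.Finite R ΩN := Module.Finite.equiv e.symm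
    exact h2 1 le_rfl ΩN this
  tfae_have 3 → 1
  · intro h3
    obtain ⟨q, g, hsurj, hker⟩ := exists_min_cover (R := R) N
    let K : ModuleCat.{0} R := ModuleCat.of R (LinearMap.ker g)
    have hsyz : IsSyzygyOf R N K := ⟨q, g, hsurj, hker, ⟨LinearEquiv.refl R _⟩⟩
    have hsm := h3 K hsyz
    obtain ⟨P⟩ := (inferInstance : HasProjectiveResolution N).out
    have hsm1 := (smulExtZero_iff' x N K P 0).1 hsm
    haveI := res_projective P 0
    obtain ⟨α, hα⟩ := lift_through g (resPi P).hom (fun p => hsurj (resPi P p))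
    have hαe : ∀ p, g (α p) = resPi P p := fun p => congrArg (fun u => u p) hα
    have cmem : ∀ p : P.complex.X 1, α (P.complex.d 1 0 p) ∈ LinearMap.ker g := by
      intro p
      rw [LinearMap.mem_ker, hαe]
      exact congrArg (fun u => u p) (resPi_d P)
    let c : P.complex.X 1 ⟶ K :=
      ModuleCat.ofHom (LinearMap.codRestrict (LinearMap.ker g) (α ∘ₗ (P.complex.d 1 0).hom) cmem)
    have hc : P.complex.d 2 1 ≫ c = 0 := by
      ext p
      have hdd : P.complex.d 1 0 (P.complex.d 2 1 p) = 0 :=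
        congrArg (fun v => v p) (P.complex.d_comp_d 2 1 0)
      exact congrFun (show α (P.complex.d 1 0 (P.complex.d 2 1 p)) = 0 by
        rw [hdd, map_zero]) _
    obtain ⟨h, hh⟩ := hsm1 c hc
    let β : (P.complex.X 0 : Type) →ₗ[R] (Fin q → R) :=
      (x • α) - (LinearMap.ker g).subtype ∘ₗ h.hom
    have hβd : ∀ p, β (P.complex.d 1 0 p) = 0 := by
      intro p
      have h1 : h (P.complex.d 1 0 p) = x • c p := congrArg (fun u => u p) hh.symm
      show x • α (P.complex.d 1 0 p) - (LinearMap.ker g).subtype (h (P.complex.d 1 0 p)) = 0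
      rw [h1, map_smul]
      have h2 : (LinearMap.ker g).subtype (c p) = α (P.complex.d 1 0 p) := rfl
      rw [h2, sub_self]
    have hkerle : LinearMap.ker (resPi P).hom ≤ LinearMap.ker β := by
      intro p hp
      obtain ⟨y, hy⟩ := resPi_exact P p hp
      rw [LinearMap.mem_ker, ← hy]
      exact hβd y
    let eQ := (resPi P).hom.quotKerEquivOfSurjective (resPi_surj P)
    let f' : (N : Type) →ₗ[R] (Fin q → R) :=
      ((LinearMap.ker (resPi P).hom).liftQ β hkerle) ∘ₗ
        (eQ.symm : (N : Type) →ₗ[R] _)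
    refine ⟨q, f', g, ?_⟩
    ext n
    obtain ⟨p, rfl⟩ := resPi_surj P n
    have hq1 : eQ.symm (resPi P p) = Submodule.Quotient.mk p := by
      rw [LinearEquiv.symm_apply_eq]
      rfl
    show g (f' (resPi P p)) = x • resPi P p
    have hf' : f' (resPi P p) = β p := by
      show ((LinearMap.ker _).liftQ β hkerle) (eQ.symm (resPi P p)) = β p
      rw [hq1]
      rfl
    rw [hf']
    show g (x • α p - (LinearMap.ker g).subtype (h p)) = x • resPi P p
    rw [map_sub, map_smul, hαe]
    have hker0 : g ((LinearMap.ker g).subtype (h p)) = 0 := (h p).2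
    rw [hker0, sub_zero]
  tfae_finish
end

section
/- Let R be a commutative Noetherian local ring, x ∈ R a non zero-divisor on a finitely generated R-module N. If x · Ext_R^1(N, Ω_R N) = 0, then Ω_R(N/xN) is isomorphic, up to free direct summands, to N ⊕ Ω_R N. -/
open CategoryTheory IsLocalRing

open CategoryTheory

open scoped Pointwise

section AuxSplit

variable {R M F : Type} [CommRing R] [AddCommGroup M] [Module R M]
  [AddCommGroup F] [Module R F]

lemma my_mem_smul_top_iff {x : R} {y : M} :
    y ∈ x • (⊤ : Submodule R M) ↔ ∃ n : M, x • n = y := by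
  rw [← SetLike.mem_coe, Submodule.coe_pointwise_smul]
  constructor
  · rintro ⟨n, -, rfl⟩
    exact ⟨n, rfl⟩
  · rintro ⟨n, rfl⟩
    exact ⟨n, trivial, rfl⟩

/-- Part B: the splitting lemma. -/
lemma split_ker (x : R) (g : F →ₗ[R] M) (hg : Function.Surjective g)
    (hreg : IsSMulRegular M x) (ψ : F →ₗ[R] F)
    (hψr : ∀ y, g (ψ y) = 0) (hψ : ∀ z, g z = 0 → ψ z = x • z) :
    Nonempty ((LinearMap.ker ((x • (⊤ : Submodule R M)).mkQ ∘ₗ g)) ≃ₗ[R]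
      M × LinearMap.ker g) := by
  set h : F →ₗ[R] M ⧸ (x • (⊤ : Submodule R M)) := (x • (⊤ : Submodule R M)).mkQ ∘ₗ g with hh
  set K : Submodule R F := LinearMap.ker h with hK
  set μ : M →ₗ[R] M := x • LinearMap.id with hμdef
  have hμapp : ∀ m, μ m = x • m := fun m => rfl
  have hμ : Function.Injective μ := fun a b hab => hreg hab
  have hKmem : ∀ y : F, y ∈ K → g y ∈ LinearMap.range μ := by
    intro y hy
    have hy' : ((x • (⊤ : Submodule R M)).mkQ) (g y) = 0 := hy
    rw [Submodule.mkQ_apply, Submodule.Quotient.mk_eq_zero] at hy'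
    obtain ⟨n, hn⟩ := my_mem_smul_top_iff.1 hy'
    exact ⟨n, hn⟩
  set eμ : M ≃ₗ[R] LinearMap.range μ := LinearEquiv.ofInjective μ hμ with heμ
  set π : K →ₗ[R] M :=
    eμ.symm.toLinearMap ∘ₗ
      LinearMap.codRestrict (LinearMap.range μ) (g ∘ₗ K.subtype) (fun y => hKmem y.1 y.2)
    with hπdef
  have hπ : ∀ y : K, x • π y = g y.1 := by
    intro y
    have h1 : π y = eμ.symm ⟨g y.1, hKmem y.1 y.2⟩ := rfl
    have h4 := congrArg Subtype.val (eμ.apply_symm_apply ⟨g y.1, hKmem y.1 y.2⟩)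
    have h3 : ∀ m : M, (eμ m : M) = x • m := fun m => rfl
    rw [h3] at h4
    rw [h1]
    exact h4
  set σ : F →ₗ[R] F := x • LinearMap.id - ψ with hσdef
  have hσ : ∀ y, σ y = x • y - ψ y := fun y => rfl
  have hσker : LinearMap.ker g ≤ LinearMap.ker σ := by
    intro z hz
    have hz' : g z = 0 := hz
    simp [LinearMap.mem_ker, hσ, hψ z hz', sub_self]
  set q : (F ⧸ LinearMap.ker g) ≃ₗ[R] M := g.quotKerEquivOfSurjective hg with hq
  have hqmk : ∀ y : F, q (Submodule.Quotient.mk y) = g y := fun y => rfl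
  set s : M →ₗ[R] F := ((LinearMap.ker g).liftQ σ hσker) ∘ₗ q.symm.toLinearMap with hsdef
  have hs : ∀ y : F, s (g y) = σ y := by
    intro y
    have : q.symm (g y) = Submodule.Quotient.mk y := by
      rw [LinearEquiv.symm_apply_eq, hqmk]
    show ((LinearMap.ker g).liftQ σ hσker) (q.symm (g y)) = σ y
    rw [this, Submodule.liftQ_apply]
  have hgs : ∀ n : M, g (s n) = x • n := by
    intro n
    obtain ⟨y, rfl⟩ := hg n
    rw [hs y, hσ]
    simp [hψr y]
  have hαmem : ∀ y : K, y.1 - s (π y) ∈ LinearMap.ker g := by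
    intro y
    simp [LinearMap.mem_ker, map_sub, hgs, hπ y]
  set α : K →ₗ[R] M × LinearMap.ker g :=
    LinearMap.prod π (LinearMap.codRestrict (LinearMap.ker g)
      (K.subtype - s ∘ₗ π) hαmem) with hαdef
  have hβmem : ∀ p : M × LinearMap.ker g, s p.1 + (p.2 : F) ∈ K := by
    rintro ⟨n, z⟩
    have h5 : g (s n + (z : F)) = x • n := by
      have hz : g (z : F) = 0 := z.2
      rw [map_add, hgs, hz, add_zero]
    show h (s n + (z : F)) = 0
    rw [hh, LinearMap.comp_apply, h5, Submodule.mkQ_apply, Submodule.Quotient.mk_eq_zero]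
    exact Submodule.smul_mem_pointwise_smul n x ⊤ trivial
  set β : (M × LinearMap.ker g) →ₗ[R] K :=
    LinearMap.codRestrict K
      (s ∘ₗ LinearMap.fst R M (LinearMap.ker g) +
        (LinearMap.ker g).subtype ∘ₗ LinearMap.snd R M (LinearMap.ker g)) hβmem with hβdef
  have hβval : ∀ p : M × LinearMap.ker g, (β p : F) = s p.1 + (p.2 : F) := fun p => rfl
  have hπβ : ∀ p : M × LinearMap.ker g, π (β p) = p.1 := by
    rintro ⟨n, z⟩
    apply hreg
    show x • π (β (n, z)) = x • n
    rw [hπ (β (n, z)), hβval]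
    have hz : g (z : F) = 0 := z.2
    rw [map_add, hgs, hz, add_zero]
  refine ⟨LinearEquiv.ofLinear α β ?_ ?_⟩
  · apply LinearMap.ext
    rintro ⟨n, z⟩
    apply Prod.ext
    · simpa [hαdef] using hπβ (n, z)
    · apply Subtype.ext
      show (β (n, z) : F) - s (π (β (n, z))) = (z : F)
      rw [hπβ (n, z), hβval]
      abel
  · apply LinearMap.ext
    intro y
    apply Subtype.ext
    show s (π y) + ((y : F) - s (π y)) = (y : F)
    abel

end AuxSplit

section AuxSchanuel

variable {R M F1 F2 : Type} [CommRing R] [AddCommGroup M] [Module R M]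
  [AddCommGroup F1] [Module R F1] [AddCommGroup F2] [Module R F2]

/-- half of Schanuel: the pullback is `F1 × ker g2`. -/
lemma pullback_equiv (g1 : F1 →ₗ[R] M) (g2 : F2 →ₗ[R] M) [Module.Projective R F1]
    (h2 : Function.Surjective g2) :
    Nonempty ((F1 × LinearMap.ker g2) ≃ₗ[R]
      LinearMap.ker (g1 ∘ₗ LinearMap.fst R F1 F2 - g2 ∘ₗ LinearMap.snd R F1 F2)) := by
  obtain ⟨h12, hh12⟩ := Module.projective_lifting_property g2 g1 h2
  set X := LinearMap.ker (g1 ∘ₗ LinearMap.fst R F1 F2 - g2 ∘ₗ LinearMap.snd R F1 F2) with hX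
  have h12app : ∀ a, g2 (h12 a) = g1 a := fun a => LinearMap.congr_fun hh12 a
  have hfwdmem : ∀ p : F1 × LinearMap.ker g2, (p.1, h12 p.1 + (p.2 : F2)) ∈ X := by
    rintro ⟨a, z⟩
    have hz : g2 (z : F2) = 0 := z.2
    show (g1 ∘ₗ LinearMap.fst R F1 F2 - g2 ∘ₗ LinearMap.snd R F1 F2)
      (a, h12 a + (z : F2)) = 0
    simp [map_add, h12app, hz, sub_self]
  set fwd : (F1 × LinearMap.ker g2) →ₗ[R] X :=
    LinearMap.codRestrict X
      (LinearMap.prod (LinearMap.fst R F1 (LinearMap.ker g2))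
        (h12 ∘ₗ LinearMap.fst R F1 (LinearMap.ker g2) +
          (LinearMap.ker g2).subtype ∘ₗ LinearMap.snd R F1 (LinearMap.ker g2)))
      (fun p => hfwdmem p) with hfwd
  have hXeq : ∀ y : X, g1 (y : F1 × F2).1 = g2 (y : F1 × F2).2 := by
    rintro ⟨⟨a, b⟩, hy⟩
    have : g1 a - g2 b = 0 := hy
    exact sub_eq_zero.mp this
  have hbwdmem : ∀ y : X, (y : F1 × F2).2 - h12 (y : F1 × F2).1 ∈ LinearMap.ker g2 := by
    intro y
    rw [LinearMap.mem_ker, map_sub, h12app, ← hXeq y, sub_self]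
  set bwd : X →ₗ[R] (F1 × LinearMap.ker g2) :=
    LinearMap.prod (LinearMap.fst R F1 F2 ∘ₗ X.subtype)
      (LinearMap.codRestrict (LinearMap.ker g2)
        (LinearMap.snd R F1 F2 ∘ₗ X.subtype - h12 ∘ₗ LinearMap.fst R F1 F2 ∘ₗ X.subtype)
        hbwdmem) with hbwd
  have hfwdval : ∀ p : F1 × LinearMap.ker g2,
      (fwd p : F1 × F2) = (p.1, h12 p.1 + (p.2 : F2)) := fun p => rfl
  refine ⟨LinearEquiv.ofLinear fwd bwd ?_ ?_⟩
  · apply LinearMap.ext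
    intro y
    apply Subtype.ext
    rw [LinearMap.comp_apply, LinearMap.id_apply, hfwdval]
    show ((y : F1 × F2).1, h12 (y : F1 × F2).1 + ((y : F1 × F2).2 - h12 (y : F1 × F2).1))
      = (y : F1 × F2)
    apply Prod.ext
    · rfl
    · show h12 (y : F1 × F2).1 + ((y : F1 × F2).2 - h12 (y : F1 × F2).1) = (y : F1 × F2).2
      abel
  · apply LinearMap.ext
    rintro ⟨a, z⟩
    apply Prod.ext
    · rfl
    · apply Subtype.ext
      show (h12 a + (z : F2)) - h12 a = (z : F2)
      abel

/-- the pullback is symmetric. -/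
lemma pullback_comm (g1 : F1 →ₗ[R] M) (g2 : F2 →ₗ[R] M) :
    Nonempty ((LinearMap.ker (g1 ∘ₗ LinearMap.fst R F1 F2 - g2 ∘ₗ LinearMap.snd R F1 F2))
      ≃ₗ[R] (LinearMap.ker (g2 ∘ₗ LinearMap.fst R F2 F1 - g1 ∘ₗ LinearMap.snd R F2 F1))) := by
  set X := LinearMap.ker (g1 ∘ₗ LinearMap.fst R F1 F2 - g2 ∘ₗ LinearMap.snd R F1 F2) with hX
  set Y := LinearMap.ker (g2 ∘ₗ LinearMap.fst R F2 F1 - g1 ∘ₗ LinearMap.snd R F2 F1) with hY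
  have hmem1 : ∀ y : X, ((y : F1 × F2).2, (y : F1 × F2).1) ∈ Y := by
    rintro ⟨⟨a, b⟩, hy⟩
    have h1 : g1 a - g2 b = 0 := hy
    show g2 b - g1 a = 0
    rw [← neg_sub, h1, neg_zero]
  have hmem2 : ∀ y : Y, ((y : F2 × F1).2, (y : F2 × F1).1) ∈ X := by
    rintro ⟨⟨a, b⟩, hy⟩
    have h1 : g2 a - g1 b = 0 := hy
    show g1 b - g2 a = 0
    rw [← neg_sub, h1, neg_zero]
  refine ⟨LinearEquiv.ofLinear
    (LinearMap.codRestrict Y ((LinearEquiv.prodComm R F1 F2).toLinearMap ∘ₗ X.subtype) hmem1)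
    (LinearMap.codRestrict X ((LinearEquiv.prodComm R F2 F1).toLinearMap ∘ₗ Y.subtype) hmem2)
    ?_ ?_⟩
  · apply LinearMap.ext; intro y; apply Subtype.ext; rfl
  · apply LinearMap.ext; intro y; apply Subtype.ext; rfl

/-- Schanuel's lemma. -/
lemma schanuel_aux (g1 : F1 →ₗ[R] M) (g2 : F2 →ₗ[R] M)
    [Module.Projective R F1] [Module.Projective R F2]
    (h1 : Function.Surjective g1) (h2 : Function.Surjective g2) :
    Nonempty ((LinearMap.ker g1 × F2) ≃ₗ[R] (LinearMap.ker g2 × F1)) := by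
  obtain ⟨e1⟩ := pullback_equiv g1 g2 h2
  obtain ⟨e2⟩ := pullback_equiv g2 g1 h1
  obtain ⟨e3⟩ := pullback_comm g1 g2
  exact ⟨(LinearEquiv.prodComm R _ _).trans
    (e2.trans (e3.symm.trans (e1.symm.trans (LinearEquiv.prodComm R _ _))))⟩

end AuxSchanuel

open CategoryTheory

section ExtLift

variable {R : Type} [CommRing R]

lemma ext_lift (x : R) (N Y : ModuleCat.{0} R) {q : ℕ} (g : (Fin q → R) →ₗ[R] ↥N)
    (hg : Function.Surjective g)
    (hann : ∀ e : ((Ext R (ModuleCat.{0} R) 1).obj (Opposite.op N)).obj Y, x • e = 0)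
    (u : ↥(LinearMap.ker g) →ₗ[R] ↥Y) :
    ∃ φ : (Fin q → R) →ₗ[R] ↥Y, ∀ z : ↥(LinearMap.ker g), φ z.1 = x • u z := by
  classical
  obtain ⟨P⟩ := (HasProjectiveResolution.out (Z := N))
  haveI := P.projective 0
  haveI := P.projective 1
  set F0 : ModuleCat.{0} R := ModuleCat.of R (Fin q → R) with hF0
  let g' : F0 ⟶ N := ModuleCat.ofHom g
  haveI hg' : Epi g' := (ModuleCat.epi_iff_surjective g').2 hg
  let ε : P.complex.X 0 ⟶ N := P.π.f 0
  haveI hεepi : Epi ε := by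
    show Epi (P.π.f 0)
    infer_instance
  have hε : Function.Surjective ε := (ModuleCat.epi_iff_surjective ε).1 hεepi
  haveI : Projective F0 := (IsProjective.iff_projective (Fin q → R)).mp inferInstance
  -- comparison maps
  let a : P.complex.X 0 ⟶ F0 := Projective.factorThru ε g'
  have ha : ∀ w, g (a w) = ε w := by
    intro w
    have := Projective.factorThru_comp ε g'
    exact congrFun (congrArg (fun (f : P.complex.X 0 ⟶ N) => ⇑(ConcreteCategory.hom f)) this) w
  let b : F0 ⟶ P.complex.X 0 := Projective.factorThru g' ε
  have hb : ∀ (y : Fin q → R), ε (b y) = g y := by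
    intro y
    have := Projective.factorThru_comp g' ε
    exact congrFun (congrArg (fun (f : F0 ⟶ N) => ⇑(ConcreteCategory.hom f)) this) y
  let aL : ↥(P.complex.X 0) →ₗ[R] (Fin q → R) := a.hom
  let bL : (Fin q → R) →ₗ[R] ↥(P.complex.X 0) := b.hom
  have haL : ∀ w, g (aL w) = ε w := ha
  have hbL : ∀ y, ε (bL y) = g y := hb
  have hεd : ∀ w, ε (P.complex.d 1 0 w) = 0 := by
    intro w
    have := P.complex_d_comp_π_f_zero
    exact congrFun (congrArg (fun (f : P.complex.X 1 ⟶ N) => ⇑(ConcreteCategory.hom f)) this) w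
  let t0 : ↥(P.complex.X 1) →ₗ[R] ↥(LinearMap.ker g) :=
    LinearMap.codRestrict (LinearMap.ker g)
      (aL ∘ₗ (P.complex.d 1 0).hom)
      (fun w => by
        rw [LinearMap.mem_ker]
        show g (aL (P.complex.d 1 0 w)) = 0
        rw [haL, hεd])
  have ht0 : ∀ w, (t0 w : Fin q → R) = aL (P.complex.d 1 0 w) := fun w => rfl
  -- the cochain complex
  let C1 := P.complex.linearYonedaObj R Y
  let S := C1.sc' 0 1 2
  -- identify Ext with concrete homology of S
  let e1 : (((Ext R (ModuleCat.{0} R) 1).obj (Opposite.op N)).obj Y) ≅ S.moduleCatLeftHomologyData.H :=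
    P.isoExt 1 Y ≪≫ ShortComplex.homologyMapIso (C1.isoSc' 0 1 2 (by simp) (by simp)) ≪≫
      S.moduleCatHomologyIso
  -- the cocycle associated to v
  have memc : ∀ v : ↥(LinearMap.ker g) →ₗ[R] ↥Y,
      (ModuleCat.ofHom (v ∘ₗ t0) : ↥(S.X₂)) ∈ LinearMap.ker S.g.hom := by
    intro v
    change (ConcreteCategory.hom S.g) _ = 0
    show (P.complex.d 2 1 ≫ ModuleCat.ofHom (v ∘ₗ t0)) = 0
    apply ModuleCat.hom_ext
    apply LinearMap.ext
    intro w
    show v (t0 (P.complex.d 2 1 w)) = 0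
    have : t0 (P.complex.d 2 1 w) = 0 := by
      apply Subtype.ext
      rw [ht0]
      show aL (P.complex.d 1 0 (P.complex.d 2 1 w)) = (0 : Fin q → R)
      have hdd := P.complex.d_comp_d 2 1 0
      have : P.complex.d 1 0 (P.complex.d 2 1 w) = 0 :=
        congrFun (congrArg (fun (f : P.complex.X 2 ⟶ P.complex.X 0) => ⇑(ConcreteCategory.hom f)) hdd) w
      rw [this, map_zero]
    rw [this, map_zero]
  let cc : (↥(LinearMap.ker g) →ₗ[R] ↥Y) → ↥(LinearMap.ker S.g.hom) :=
    fun v => ⟨ModuleCat.ofHom (v ∘ₗ t0), memc v⟩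
  let EE : (↥(LinearMap.ker g) →ₗ[R] ↥Y) →
      (((Ext R (ModuleCat.{0} R) 1).obj (Opposite.op N)).obj Y) :=
    fun v => e1.inv (Submodule.Quotient.mk (cc v))
  have hccsmul : cc (x • u) = x • cc u := by
    apply Subtype.ext
    show ModuleCat.ofHom ((x • u) ∘ₗ t0) = x • ModuleCat.ofHom (u ∘ₗ t0)
    rw [LinearMap.smul_comp x u t0]
    rfl
  have h0 : EE (x • u) = 0 := by
    show e1.inv (Submodule.Quotient.mk (cc (x • u))) = 0
    rw [hccsmul]
    have : Submodule.Quotient.mk (x • cc u) =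
        x • (Submodule.Quotient.mk (cc u) : S.moduleCatLeftHomologyData.H) := rfl
    rw [this]
    exact (map_smul (ConcreteCategory.hom e1.inv) x _).trans (hann _)
  have h1 : (Submodule.Quotient.mk (cc (x • u)) : S.moduleCatLeftHomologyData.H) = 0 := by
    have h2 := congrArg e1.hom h0
    rw [map_zero] at h2
    have h3 : ∀ t, e1.hom (e1.inv t) = t := by
      intro t
      have := e1.inv_hom_id
      exact congrFun (congrArg (fun (f : S.moduleCatLeftHomologyData.H ⟶ S.moduleCatLeftHomologyData.H)
        => ⇑(ConcreteCategory.hom f)) this) t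
    exact (h3 _).symm.trans h2
  rw [Submodule.Quotient.mk_eq_zero] at h1
  obtain ⟨v, hv⟩ := h1
  let v' : P.complex.X 0 ⟶ Y := v
  have hv' : S.f v = (ModuleCat.ofHom ((x • u) ∘ₗ t0) : ↥S.X₂) :=
    congrArg Subtype.val hv
  have hvapp : ∀ w : ↥(P.complex.X 1), v' (P.complex.d 1 0 w) = x • u (t0 w) := by
    intro w
    exact congrFun (congrArg (fun (f : P.complex.X 1 ⟶ Y) => ⇑(ConcreteCategory.hom f)) hv') w
  -- exactness of the resolution at degree 0
  have hexact := (ShortComplex.moduleCat_exact_iff _).1 P.exact₀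
  -- the correction map
  let m : (Fin q → R) →ₗ[R] ↥(LinearMap.ker g) :=
    LinearMap.codRestrict (LinearMap.ker g)
      (aL ∘ₗ bL - LinearMap.id)
      (fun y => by
        rw [LinearMap.mem_ker]
        show g (aL (bL y) - y) = 0
        rw [map_sub, haL, hbL, sub_self])
  have hm : ∀ y, (m y : Fin q → R) = aL (bL y) - y := fun y => rfl
  refine ⟨v'.hom ∘ₗ bL - (x • u) ∘ₗ m, ?_⟩
  intro z
  have hz : ε (bL z.1) = 0 := by rw [hbL]; exact z.2
  obtain ⟨w, hw⟩ := hexact (bL z.1) hz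
  have harg : t0 w - m z.1 = z := by
    apply Subtype.ext
    show aL (P.complex.d 1 0 w) - (aL (bL z.1) - z.1) = z.1
    rw [hw]
    abel
  show v' (bL z.1) - (x • u) (m z.1) = x • u z
  rw [← hw, hvapp w]
  show x • u (t0 w) - x • u (m z.1) = x • u z
  rw [← smul_sub, ← map_sub, harg]

end ExtLift


open scoped Pointwise in
/-- if `x` is `N`-regular and `x · Ext^1(N, ΩN) = 0` then
`Ω(N/xN)` is stably isomorphic to `N ⊕ ΩN`. -/
theorem syzygy_of_quotient_stably_iso
    (R : Type) [CommRing R] [IsNoetherianRing R] [IsLocalRing R]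
    (x : R) (N : ModuleCat.{0} R) [Module.Finite R N]
    (hreg : IsSMulRegular (↥N) x)
    (ΩN : ModuleCat.{0} R) (hΩ : IsSyzygyOf R N ΩN)
    (hann : SMulExtZero R x 1 N ΩN)
    (S : ModuleCat.{0} R)
    (hS : IsSyzygyOf R (ModuleCat.of R (QuotSMulTop x ↥N)) S) :
    StablyIso R S (ModuleCat.of R (↥N × ↥ΩN)) := by
  obtain ⟨q, g, hgsurj, -, ⟨eΩ⟩⟩ := hΩ
  obtain ⟨p, g', hg'surj, -, ⟨eS⟩⟩ := hS
  obtain ⟨φ, hφ⟩ := ext_lift x N ΩN g hgsurj hann eΩ.symm.toLinearMap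
  set ψ : (Fin q → R) →ₗ[R] (Fin q → R) :=
    (LinearMap.ker g).subtype ∘ₗ eΩ.toLinearMap ∘ₗ φ with hψdef
  have hψr : ∀ y, g (ψ y) = 0 := fun y => (eΩ (φ y)).2
  have hψ : ∀ z, g z = 0 → ψ z = x • z := by
    intro z hz
    show ((eΩ (φ z) : LinearMap.ker g) : Fin q → R) = x • z
    rw [show φ z = x • eΩ.symm ⟨z, hz⟩ from hφ ⟨z, hz⟩]
    rw [map_smul, eΩ.apply_symm_apply]
    rfl
  obtain ⟨e2⟩ := split_ker x g hgsurj hreg ψ hψr hψ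
  set h : (Fin q → R) →ₗ[R] QuotSMulTop x ↥N :=
    (x • (⊤ : Submodule R ↥N)).mkQ ∘ₗ g with hh
  have hhsurj : Function.Surjective h := (Submodule.mkQ_surjective _).comp hgsurj
  obtain ⟨e3⟩ := schanuel_aux (M := QuotSMulTop x ↥N) g' h hg'surj hhsurj
  refine ⟨q, p, ⟨?_⟩⟩
  have E1 : (↥S × (Fin q → R)) ≃ₗ[R] (↥(LinearMap.ker g') × (Fin q → R)) :=
    eS.prodCongr (LinearEquiv.refl R (Fin q → R))
  have E2 : (↥S × (Fin q → R)) ≃ₗ[R] (↥(LinearMap.ker h) × (Fin p → R)) := E1.trans e3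
  have E3 : (↥(LinearMap.ker h) × (Fin p → R)) ≃ₗ[R]
      ((↥N × ↥(LinearMap.ker g)) × (Fin p → R)) :=
    e2.prodCongr (LinearEquiv.refl R (Fin p → R))
  have E4 : ((↥N × ↥(LinearMap.ker g)) × (Fin p → R)) ≃ₗ[R] ((↥N × ↥ΩN) × (Fin p → R)) :=
    ((LinearEquiv.refl R ↥N).prodCongr eΩ.symm).prodCongr (LinearEquiv.refl R (Fin p → R))
  exact E2.trans (E3.trans E4)
end

section
/- Let R be a commutative Noetherian local ring, N a nonzero finitely generated R-module, M = Ω_R N its first syzygy, and x ∈ R an R-regular element with x · Ext_R^1(N, Ω_R N) = 0. Then there is a short exact sequence 0 → F → N ⊕ Ω_R N → M/xM → 0 with F a finitely generated free R-module. -/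
open CategoryTheory IsLocalRing

noncomputable section AuxRes
open CategoryTheory Limits Projective
variable {C : Type*} [Category C] [Abelian C] [EnoughProjectives C]
def auxComplex {Z P : C} [Projective P] (π : P ⟶ Z) : ChainComplex C ℕ :=
  ChainComplex.mk' P (syzygies π) (d π) fun f => ⟨syzygies f, d f, by exact (Category.assoc _ _ _).trans ((congrArg _ (kernel.condition f)).trans comp_zero)⟩
lemma auxComplex_d_1_0 {Z P : C} [Projective P] (π : P ⟶ Z) :
    (auxComplex π).d 1 0 = d π := by
  simp [auxComplex]
lemma auxComplex_exactAt_succ {Z P : C} [Projective P] (π : P ⟶ Z) (n : ℕ) :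
    (auxComplex π).ExactAt (n + 1) := by
  rw [HomologicalComplex.exactAt_iff' _ (n + 1 + 1) (n + 1) n (by simp) (by simp)]
  let e : (auxComplex π).X (n + 2) ≅ syzygies ((auxComplex π).d (n + 1) n) :=
    ChainComplex.mk'XIso _ _ _ _ n
  have hd : (auxComplex π).d (n + 2) (n + 1) = e.hom ≫ d ((auxComplex π).d (n + 1) n) :=
    ChainComplex.mk'_d _ _ _ _ n
  have hex := exact_d_f ((auxComplex π).d (n + 1) n)
  refine ShortComplex.exact_of_iso ?_ hex
  refine ShortComplex.isoMk e.symm (Iso.refl _) (Iso.refl _) ?_ ?_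
  · exact (Iso.symm_hom e ▸ ((congrArg _ hd).trans (Iso.inv_hom_id_assoc e _))).trans (Category.comp_id _).symm
  · exact (Category.id_comp _).trans (Category.comp_id _).symm
instance auxComplex_projective {Z P : C} [Projective P] (π : P ⟶ Z) (n : ℕ) :
    Projective ((auxComplex π).X n) := by
  obtain (_ | _ | _ | n) := n
  · exact (inferInstance : Projective P)
  all_goals apply Projective.projective_over
def auxRes {Z P : C} [Projective P] (π : P ⟶ Z) [Epi π] :
    ProjectiveResolution Z where
  complex := auxComplex π
  π := (ChainComplex.toSingle₀Equiv _ _).symm ⟨π, by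
          rw [auxComplex_d_1_0]; exact (Category.assoc _ _ _).trans ((congrArg _ (kernel.condition π)).trans comp_zero)⟩
  quasiIso := ⟨fun n => by
    cases n
    · rw [ChainComplex.quasiIsoAt₀_iff, ShortComplex.quasiIso_iff_of_zeros']
      · refine (ShortComplex.exact_and_epi_g_iff_of_iso ?_).2
          ⟨exact_d_f π, by dsimp; infer_instance⟩
        exact ShortComplex.isoMk (Iso.refl _) (Iso.refl _) (Iso.refl _)
          (by exact (Category.id_comp _).trans ((auxComplex_d_1_0 π).symm.trans (Category.comp_id _).symm)) (by exact (Category.id_comp _).trans ((ChainComplex.toSingle₀Equiv_symm_apply_f_zero (C := auxComplex π) (X := Z) π _).symm.trans (Category.comp_id _).symm))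
      all_goals rfl
    · rw [quasiIsoAt_iff_exactAt']
      · apply auxComplex_exactAt_succ
      · apply ChainComplex.exactAt_succ_single_obj⟩
end AuxRes

open Pointwise

open CategoryTheory Limits in
lemma key_lift (R : Type) [CommRing R] (N M : ModuleCat.{0} R)
    (x : R) (hann : (∀ e : ((Ext R (ModuleCat.{0} R) 1).obj (Opposite.op N)).obj M, x • e = 0))
    {q : ℕ} (g : (Fin q → R) →ₗ[R] N) (hg : Function.Surjective g)
    (φ : (LinearMap.ker g) →ₗ[R] M) :
    ∃ h : (Fin q → R) →ₗ[R] M, ∀ k : LinearMap.ker g, h (k : Fin q → R) = x • φ k := by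
  classical
  let F₀ : ModuleCat.{0} R := ModuleCat.of R (Fin q → R)
  haveI : Projective F₀ := ModuleCat.projective_of_free (Pi.basisFun R (Fin q))
  let π : F₀ ⟶ N := ModuleCat.ofHom g
  haveI : Epi π := (ModuleCat.epi_iff_surjective π).2 (by exact hg)
  let res : ProjectiveResolution N := auxRes π
  have hrange : LinearMap.range (res.complex.d 1 0).hom = LinearMap.ker g := by
    have h1 := (exact_d_f π).moduleCat_range_eq_ker
    show LinearMap.range (res.complex.d 1 0).hom = LinearMap.ker π.hom
    rw [show res.complex.d 1 0 = Projective.d π from auxComplex_d_1_0 π]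
    exact h1
  -- the cochain complex computing Ext and its degree-1 short complex
  let CC := res.complex.linearYonedaObj R M
  let S : ShortComplex (ModuleCat.{0} R) := CC.sc' 0 1 2
  let ε : (((Ext R (ModuleCat.{0} R) 1).obj (Opposite.op N)).obj M) ≃ₗ[R]
      S.moduleCatLeftHomologyData.H :=
    ((res.isoExt 1 M) ≪≫ (CC.homologyIsoSc' 0 1 2 (by simp) (by simp)) ≪≫
      S.moduleCatHomologyIso).toLinearEquiv
  -- the cocycle φ ∘ (corestricted d₁)
  let d₁ : res.complex.X 1 →ₗ[R] (Fin q → R) := (res.complex.d 1 0).hom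
  have memr : ∀ w, d₁ w ∈ LinearMap.ker g :=
    fun w => hrange ▸ LinearMap.mem_range_self d₁ w
  let ψ : res.complex.X 1 ⟶ M := ModuleCat.ofHom <|
    φ.comp (LinearMap.codRestrict (LinearMap.ker g) d₁ memr)
  have hcyc : S.g ψ = 0 := by
    show res.complex.d 2 1 ≫ ψ = 0
    ext w
    show φ ⟨d₁ (res.complex.d 2 1 w), _⟩ = 0
    have h0 : d₁ (res.complex.d 2 1 w) = 0 := by
      show (res.complex.d 2 1 ≫ res.complex.d 1 0) w = 0
      rw [HomologicalComplex.d_comp_d]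
      rfl
    rw [show (⟨d₁ (res.complex.d 2 1 w), _⟩ : LinearMap.ker g) = 0 from Subtype.ext h0,
      map_zero]
  -- its homology class is killed by x
  set cmk : S.moduleCatLeftHomologyData.H :=
    Submodule.Quotient.mk (⟨ψ, hcyc⟩ : LinearMap.ker S.g.hom) with hcmk
  have hc : (Submodule.Quotient.mk (x • (⟨ψ, hcyc⟩ : LinearMap.ker S.g.hom)) :
      S.moduleCatLeftHomologyData.H) = 0 := by
    have h1 : (Submodule.Quotient.mk (x • (⟨ψ, hcyc⟩ : LinearMap.ker S.g.hom)) :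
        S.moduleCatLeftHomologyData.H) = x • cmk := rfl
    have h2 := (ε.map_smul x (ε.symm cmk)).symm
    rw [ε.apply_symm_apply] at h2
    rw [h1, h2, hann, map_zero]; rfl
  rw [Submodule.Quotient.mk_eq_zero] at hc
  obtain ⟨h, hh⟩ := hc
  have hh' : S.f h = x • ψ := congrArg Subtype.val hh
  let h' : (Fin q → R) →ₗ[R] M := h.hom
  have hh2 : res.complex.d 1 0 ≫ (show res.complex.X 0 ⟶ M from h) = x • ψ := hh'
  refine ⟨h', fun k => ?_⟩
  obtain ⟨w, hw⟩ : ∃ w, d₁ w = (k : Fin q → R) := by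
    have : (k : Fin q → R) ∈ LinearMap.range d₁ := hrange.symm ▸ k.2
    exact this
  have e1 : h' (d₁ w) = x • φ ⟨d₁ w, memr w⟩ := LinearMap.congr_fun (congrArg ModuleCat.Hom.hom hh2) w
  have e2 : (⟨d₁ w, memr w⟩ : LinearMap.ker g) = k := Subtype.ext hw
  rw [← e2]
  exact e1

/-- the base case of Proposition 2.9: a short exact sequence
`0 → F → N ⊕ Ω N → M/xM → 0` with `F` free, where `M = Ω N`. -/
theorem ses_free_to_sum_to_quotient
    (R : Type) [CommRing R] [IsNoetherianRing R] [IsLocalRing R]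
    (N : ModuleCat.{0} R) [Module.Finite R N] [Nontrivial N]
    (M : ModuleCat.{0} R) (hM : IsSyzygyOf R N M)
    (x : R) (hx : RingTheory.Sequence.IsRegular R [x])
    (hann : SMulExtZero R x 1 N M) :
    ∃ (q : ℕ) (f : (Fin q → R) →ₗ[R] (↥N × ↥M))
      (g : (↥N × ↥M) →ₗ[R] QuotSMulTop x ↥M),
      Function.Injective f ∧ Function.Surjective g ∧ LinearMap.range f = LinearMap.ker g := by
  classical
  obtain ⟨q, g, hg, -, ⟨eM⟩⟩ := hM
  -- x is a regular element of R
  have hxreg : IsSMulRegular R x := by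
    have h1 := hx.toIsWeaklyRegular
    rw [RingTheory.Sequence.isWeaklyRegular_cons_iff] at h1
    exact h1.1
  -- x is regular on M
  have hxM : ∀ m : ↥M, x • m = 0 → m = 0 := by
    intro m hm
    have h1 : x • (eM m) = 0 := by rw [← map_smul, hm, map_zero]
    have h2 : x • ((eM m : Fin q → R)) = 0 := congrArg Subtype.val h1
    have h3 : (eM m : Fin q → R) = 0 := by
      funext i
      exact hxreg (by simpa using congrFun h2 i)
    have : eM m = 0 := Subtype.ext h3
    simpa using congrArg eM.symm this
  obtain ⟨h, hh⟩ := key_lift R N M x hann g hg eM.symm.toLinearMap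
  -- the map N → M/xM induced by h
  set p : Submodule R ↥M := x • (⊤ : Submodule R ↥M) with hp
  let hbar0 : (Fin q → R) →ₗ[R] QuotSMulTop x ↥M := p.mkQ.comp h
  have hker : LinearMap.ker g ≤ LinearMap.ker hbar0 := by
    intro v hv
    refine LinearMap.mem_ker.mpr ?_
    show p.mkQ (h v) = 0
    have h1 : h v = x • eM.symm ⟨v, hv⟩ := hh ⟨v, hv⟩
    rw [h1, Submodule.mkQ_apply, Submodule.Quotient.mk_eq_zero]
    exact Submodule.smul_mem_pointwise_smul _ _ _ Submodule.mem_top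
  let e₁ := g.quotKerEquivOfSurjective hg
  let hbar : ↥N →ₗ[R] QuotSMulTop x ↥M :=
    ((LinearMap.ker g).liftQ hbar0 hker).comp e₁.symm.toLinearMap
  have he₁ : ∀ v : Fin q → R, e₁ (Submodule.Quotient.mk v) = g v := fun v => rfl
  have hhbar : ∀ v : Fin q → R, hbar (g v) = Submodule.Quotient.mk (h v) := by
    intro v
    have h1 : e₁.symm (g v) = Submodule.Quotient.mk v := by
      apply e₁.injective
      rw [e₁.apply_symm_apply, he₁]
    show (LinearMap.ker g).liftQ hbar0 hker (e₁.symm (g v)) = _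
    rw [h1]
    rfl
  refine ⟨q, LinearMap.prod g h, LinearMap.coprod (-hbar) p.mkQ, ?_, ?_, ?_⟩
  · rw [← LinearMap.ker_eq_bot, eq_bot_iff]
    intro v hv
    have hv' : (g v, h v) = (0 : ↥N × ↥M) := hv
    have hv1 : g v = 0 := congrArg Prod.fst hv'
    have hv2 : h v = 0 := congrArg Prod.snd hv'
    have h1 : h v = x • eM.symm ⟨v, hv1⟩ := hh ⟨v, hv1⟩
    rw [hv2] at h1
    have h2 : eM.symm ⟨v, hv1⟩ = 0 := hxM _ h1.symm
    have h3 : (⟨v, hv1⟩ : LinearMap.ker g) = 0 := by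
      simpa using congrArg eM h2
    simpa using congrArg Subtype.val h3
  · intro m
    obtain ⟨m', rfl⟩ := Submodule.Quotient.mk_surjective p m
    exact ⟨(0, m'), by simp⟩
  · apply le_antisymm
    · rintro _ ⟨v, rfl⟩
      refine LinearMap.mem_ker.mpr ?_
      show -hbar (g v) + p.mkQ (h v) = 0
      rw [hhbar v, Submodule.mkQ_apply, neg_add_cancel]
    · rintro ⟨n, m⟩ hnm
      have hnm' : -hbar n + p.mkQ m = 0 := hnm
      obtain ⟨v, rfl⟩ := hg n
      rw [hhbar v] at hnm'
      have h1 : m - h v ∈ p := by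
        rw [← Submodule.Quotient.eq]
        exact (neg_add_eq_zero.mp hnm').symm
      have h1' : m - h v ∈ x • ((⊤ : Submodule R ↥M) : Set ↥M) := by
        rw [← Submodule.coe_pointwise_smul]
        exact h1
      obtain ⟨m', -, hm'⟩ := Set.mem_smul_set.mp h1'
      refine ⟨v + (eM m' : Fin q → R), ?_⟩
      have hgk : g (eM m' : Fin q → R) = 0 := (eM m').2
      have hhk : h (eM m' : Fin q → R) = x • m' := by
        rw [hh (eM m')]
        simp
      show (g (v + _), h (v + _)) = (g v, m)
      rw [map_add, map_add, hgk, hhk, add_zero, hm']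
      congr 1
      abel
end
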